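/- Assume 𝔡 = 𝔠. Then Miller forcing has the incompatibility shrinking property: for every Miller tree T, every cardinal μ < 𝔠, and every family (S_α : α < μ) of Miller trees each incompatible with T, there is a Miller tree T' ⊆ T such that [T'] ∩ [S_α] = ∅ for all α < μ. -/

import Mathlib

/-- The restriction `x↾n` of a sequence `x ∈ ω^ω` to its first `n` values, as a finite sequence. -/
def seqRestrict (x : ℕ → ℕ) (n : ℕ) : List ℕ := List.ofFn fun i : Fin n => x i

/-- A tree on `ω`: a nonempty set of finite sequences closed under initial segments. -/
def IsSeqTree (T : Set (List ℕ)) : Prop :=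
  T.Nonempty ∧ ∀ s ∈ T, ∀ t : List ℕ, t <+: s → t ∈ T

/-- `[T]`, the set of branches of a tree `T ⊆ ω^{<ω}`. -/
def branches (T : Set (List ℕ)) : Set (ℕ → ℕ) := {x | ∀ n : ℕ, seqRestrict x n ∈ T}

/-- `S` and `T` are compatible in `𝕋` (ordered by inclusion) if they have a common extension. -/
def Compat (𝕋 : Set (Set (List ℕ))) (S T : Set (List ℕ)) : Prop :=
  ∃ R ∈ 𝕋, R ⊆ S ∧ R ⊆ T

/-- A Miller tree: a tree in which every node has an extension with infinitely many
immediate successors in the tree. -/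
def IsMiller (T : Set (List ℕ)) : Prop :=
  IsSeqTree T ∧ ∀ t ∈ T, ∃ s ∈ T, t <+: s ∧ {n : ℕ | s ++ [n] ∈ T}.Infinite

/-- The dominating number `𝔡`: the least cardinality of a family `F ⊆ ω^ω` dominating with
respect to eventual domination `≤*`. -/
noncomputable def dominatingNumber : Cardinal :=
  sInf {c : Cardinal | ∃ F : Set (ℕ → ℕ), Cardinal.mk F = c ∧
    ∀ g : ℕ → ℕ, ∃ f ∈ F, ∀ᶠ n in Filter.atTop, g n ≤ f n}

@[simp] lemma seqRestrict_length (x : ℕ → ℕ) (n : ℕ) : (seqRestrict x n).length = n := by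
  simp [seqRestrict]

@[simp] lemma seqRestrict_zero (x : ℕ → ℕ) : seqRestrict x 0 = [] := by
  simp [seqRestrict]

lemma seqRestrict_getElem (x : ℕ → ℕ) {n i : ℕ} (h : i < n) :
    (seqRestrict x n)[i]'(by simpa using h) = x i := by
  simp [seqRestrict]

lemma seqRestrict_prefix (x : ℕ → ℕ) {m n : ℕ} (h : m ≤ n) :
    seqRestrict x m <+: seqRestrict x n := by
  refine ⟨seqRestrict (fun i => x (m + i)) (n - m), ?_⟩
  apply List.ext_getElem
  · simp; omega
  · intro i h1 h2
    simp only [seqRestrict] at *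
    rcases lt_or_ge i m with hi | hi
    · rw [List.getElem_append_left (by simpa using hi)]
      simp
    · rw [List.getElem_append_right (by simpa using hi)]
      simp only [List.getElem_ofFn]
      congr 1
      simp; omega

lemma prefix_seqRestrict {x : ℕ → ℕ} {n : ℕ} {l : List ℕ} (h : l <+: seqRestrict x n) :
    l = seqRestrict x l.length := by
  have hlen : l.length ≤ n := by simpa using h.length_le
  apply List.ext_getElem (by simp)
  intro i h1 h2
  rw [h.getElem h1, seqRestrict_getElem x (lt_of_lt_of_le h1 hlen),
    seqRestrict_getElem x (by simpa using h1)]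

lemma nil_mem_tree {Q : Set (List ℕ)} (hQ : IsSeqTree Q) : [] ∈ Q := by
  obtain ⟨s, hs⟩ := hQ.1
  exact hQ.2 s hs [] List.nil_prefix

/-! ### Dichotomy: a tree with no Miller subtree has σ-bounded branch set -/

/-- `t` is a bounded node: branches through `t` are covered by countably many pointwise bounds. -/
def BddAt (Q : Set (List ℕ)) (t : List ℕ) : Prop :=
  ∃ F : ℕ → ℕ → ℕ, ∀ x ∈ branches Q, seqRestrict x t.length = t → ∃ n, ∀ m, x m ≤ F n m

def Bset (Q : Set (List ℕ)) : Set (List ℕ) := {t | t ∈ Q ∧ ¬ BddAt Q t}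

def Rset (Q : Set (List ℕ)) : Set (List ℕ) := {u | ∃ b ∈ Bset Q, u <+: b}

lemma Rset_prefix_closed {Q : Set (List ℕ)} {u v : List ℕ} (h : v ∈ Rset Q) (huv : u <+: v) :
    u ∈ Rset Q := by
  obtain ⟨b, hb, hvb⟩ := h
  exact ⟨b, hb, huv.trans hvb⟩

def LvSet (Q : Set (List ℕ)) (t : List ℕ) (k : ℕ) : Set (List ℕ) :=
  {s ∈ Rset Q | t <+: s ∧ s.length = t.length + k}

noncomputable def fRfun (Q : Set (List ℕ)) (t : List ℕ) (m : ℕ) : ℕ :=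
  sSup ((fun s => s.getD m 0) '' (insert t (LvSet Q t (m + 1 - t.length))))

open Classical in
noncomputable def GF (Q : Set (List ℕ)) (u : List ℕ) : ℕ → ℕ → ℕ :=
  if h : BddAt Q u then h.choose else fun _ _ => 0

lemma GF_spec {Q : Set (List ℕ)} {u : List ℕ} (h : BddAt Q u) :
    ∀ x ∈ branches Q, seqRestrict x u.length = u → ∃ n, ∀ m, x m ≤ GF Q u n m := by
  rw [GF]
  rw [dif_pos h]
  exact h.choose_spec

lemma LvSet_finite {Q : Set (List ℕ)} {t : List ℕ}
    (hfin : ∀ s : List ℕ, t <+: s → {n : ℕ | s ++ [n] ∈ Rset Q}.Finite) (k : ℕ) :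
    (LvSet Q t k).Finite := by
  induction k with
  | zero =>
      apply Set.Finite.subset (Set.finite_singleton t)
      rintro s ⟨_, hts, hlen⟩
      exact (hts.eq_of_length (by omega)).symm
  | succ k ih =>
      have hbi : (⋃ p ∈ LvSet Q t k, (fun n => p ++ [n]) '' {n : ℕ | p ++ [n] ∈ Rset Q}).Finite := by
        apply Set.Finite.biUnion ih
        rintro p ⟨hpR, htp, hlp⟩
        exact (hfin p htp).image _
      apply Set.Finite.subset hbi
      rintro s ⟨hsR, hts, hlen⟩
      rcases List.eq_nil_or_concat s with rfl | ⟨p, a, rfl⟩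
      · exfalso; simp at hlen
      · rw [List.concat_eq_append] at *
        have hps : p <+: p ++ [a] := List.prefix_append p [a]
        have hlp : p.length = t.length + k := by
          have := hlen; simp at this; omega
        have htp : t <+: p := List.prefix_of_prefix_length_le hts hps (by omega)
        exact Set.mem_biUnion (⟨Rset_prefix_closed hsR hps, htp, hlp⟩ :
          p ∈ LvSet Q t k) ⟨a, hsR, rfl⟩

lemma claim_splitting {Q : Set (List ℕ)} (hQ : IsSeqTree Q) {t : List ℕ} (ht : t ∈ Bset Q) :
    ∃ s, t <+: s ∧ {n : ℕ | s ++ [n] ∈ Rset Q}.Infinite := by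
  by_contra hcon
  push_neg at hcon
  have hfin : ∀ s : List ℕ, t <+: s → {n : ℕ | s ++ [n] ∈ Rset Q}.Finite := by
    intro s hts
    exact hcon s hts
  have hLv := LvSet_finite (Q := Q) (t := t) hfin
  -- build witnessing family
  set F : ℕ → ℕ → ℕ := fun i =>
    Nat.rec (fRfun Q t)
      (fun j _ => GF Q (Denumerable.ofNat (List ℕ × ℕ) j).1 (Denumerable.ofNat (List ℕ × ℕ) j).2) i
    with hF
  apply ht.2
  refine ⟨F, ?_⟩
  intro x hx hxt
  by_cases hstay : ∀ k, t.length ≤ k → seqRestrict x k ∈ Rset Q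
  · refine ⟨0, fun m => ?_⟩
    have hbdd : BddAbove ((fun s => s.getD m 0) ''
        (insert t (LvSet Q t (m + 1 - t.length)))) :=
      (((hLv _).insert t).image _).bddAbove
    rcases lt_or_ge m t.length with hm | hm
    · have : x m = t.getD m 0 := by
        rw [← hxt, List.getD_eq_getElem _ _ (by simpa using hm),
          seqRestrict_getElem x hm]
      rw [this]
      exact le_csSup hbdd ⟨t, Set.mem_insert t _, rfl⟩
    · have hmem : seqRestrict x (m+1) ∈ LvSet Q t (m + 1 - t.length) := by
        refine ⟨hstay (m+1) (by omega), ?_, by simp; omega⟩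
        rw [← hxt]
        exact seqRestrict_prefix x (by omega)
      have : x m = (seqRestrict x (m+1)).getD m 0 := by
        rw [List.getD_eq_getElem _ _ (by simp), seqRestrict_getElem x (by omega)]
      rw [this]
      exact le_csSup hbdd ⟨_, Set.mem_insert_of_mem _ hmem, rfl⟩
  · push_neg at hstay
    obtain ⟨k, hk, hkR⟩ := hstay
    set u := seqRestrict x k with hu
    have huQ : u ∈ Q := hx k
    have huB : BddAt Q u := by
      by_contra hnb
      exact hkR ⟨u, ⟨huQ, hnb⟩, List.prefix_refl _⟩
    obtain ⟨n, hn⟩ := GF_spec huB x hx (by rw [hu, seqRestrict_length])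
    refine ⟨Encodable.encode (u, n) + 1, ?_⟩
    intro m
    have : F (Encodable.encode (u, n) + 1) = GF Q u n := by
      simp [hF, Denumerable.ofNat_encode]
    rw [this]
    exact hn m

lemma exists_bound {Q : Set (List ℕ)} (hQ : IsSeqTree Q)
    (hnm : ∀ R : Set (List ℕ), IsMiller R → ¬ R ⊆ Q) :
    ∃ F : ℕ → ℕ → ℕ, ∀ x ∈ branches Q, ∃ n, ∀ m, x m ≤ F n m := by
  by_cases hB : BddAt Q []
  · obtain ⟨F, hF⟩ := hB
    exact ⟨F, fun x hx => hF x hx (by simp)⟩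
  · exfalso
    have hnilB : [] ∈ Bset Q := ⟨nil_mem_tree hQ, hB⟩
    apply hnm (Rset Q) ?_ ?_
    · constructor
      · constructor
        · exact ⟨[], [], hnilB, List.prefix_refl _⟩
        · intro s hs u hus
          exact Rset_prefix_closed hs hus
      · intro u hu
        obtain ⟨b, hb, hub⟩ := hu
        obtain ⟨s, hts, hinf⟩ := claim_splitting hQ hb
        obtain ⟨n, hn⟩ := hinf.nonempty
        exact ⟨s, Rset_prefix_closed hn (List.prefix_append s [n]), hub.trans hts, hinf⟩
    · rintro u ⟨b, hb, hub⟩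
      exact hQ.2 b hb.1 u hub

/-! ### The canonical splitting structure of a Miller tree -/

def Asucc (T : Set (List ℕ)) (t : List ℕ) : Set ℕ := {n | t ++ [n] ∈ T}

def Wsplit (T : Set (List ℕ)) : Set (List ℕ) := {t | t ∈ T ∧ (Asucc T t).Infinite}

open Classical in
noncomputable def nextW (T : Set (List ℕ)) (t : List ℕ) : List ℕ :=
  if h : ∃ w ∈ Wsplit T, t <+: w then h.choose else t

lemma nextW_prefix (T : Set (List ℕ)) (t : List ℕ) : t <+: nextW T t := by
  rw [nextW]
  split
  · next h => exact h.choose_spec.2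
  · exact List.prefix_refl t

lemma nextW_memW {T : Set (List ℕ)} {t : List ℕ} (h : ∃ w ∈ Wsplit T, t <+: w) :
    nextW T t ∈ Wsplit T := by
  rw [nextW, dif_pos h]
  exact h.choose_spec.1

lemma exists_W_above {T : Set (List ℕ)} (hT : IsMiller T) {t : List ℕ} (ht : t ∈ T) :
    ∃ w ∈ Wsplit T, t <+: w := by
  obtain ⟨s, hs, hts, hinf⟩ := hT.2 t ht
  exact ⟨s, ⟨hs, hinf⟩, hts⟩

noncomputable def nu (T : Set (List ℕ)) (t : List ℕ) (n : ℕ) : List ℕ := nextW T (t ++ [n])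

lemma nu_prefix (T : Set (List ℕ)) (t : List ℕ) (n : ℕ) : t ++ [n] <+: nu T t n :=
  nextW_prefix T (t ++ [n])

lemma nu_memW {T : Set (List ℕ)} (hT : IsMiller T) {t : List ℕ} {n : ℕ}
    (ht : t ∈ Wsplit T) (hn : n ∈ Asucc T t) : nu T t n ∈ Wsplit T :=
  nextW_memW (exists_W_above hT hn)

noncomputable def rootW (T : Set (List ℕ)) : List ℕ := nextW T []

lemma rootW_memW {T : Set (List ℕ)} (hT : IsMiller T) : rootW T ∈ Wsplit T :=
  nextW_memW (exists_W_above hT (nil_mem_tree hT.1))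

noncomputable def nodeOf (T : Set (List ℕ)) (q : List ℕ) : List ℕ := q.foldl (nu T) (rootW T)

@[simp] lemma nodeOf_nil (T : Set (List ℕ)) : nodeOf T [] = rootW T := rfl

lemma nodeOf_snoc (T : Set (List ℕ)) (q : List ℕ) (n : ℕ) :
    nodeOf T (q ++ [n]) = nu T (nodeOf T q) n := by
  simp [nodeOf, List.foldl_append]

lemma nodeOf_extend (T : Set (List ℕ)) (q : List ℕ) (n : ℕ) :
    nodeOf T q ++ [n] <+: nodeOf T (q ++ [n]) := by
  rw [nodeOf_snoc]; exact nu_prefix T _ n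

lemma nodeOf_mono (T : Set (List ℕ)) : ∀ {q q' : List ℕ}, q <+: q' →
    nodeOf T q <+: nodeOf T q' := by
  intro q q' h
  induction q' using List.reverseRecOn with
  | nil => rw [List.prefix_nil.mp h]
  | append_singleton p m ih =>
      rcases List.prefix_concat_iff.mp h with rfl | h'
      · exact List.prefix_refl _
      · exact (ih h').trans ((List.prefix_append _ _).trans (nodeOf_extend T p m))

lemma nodeOf_len_ge (T : Set (List ℕ)) (q : List ℕ) :
    (rootW T).length + q.length ≤ (nodeOf T q).length := by
  induction q using List.reverseRecOn with
  | nil => simp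
  | append_singleton p m ih =>
      have h1 := (nodeOf_extend T p m).length_le
      simp only [List.length_append, List.length_singleton] at *
      omega

lemma prefix_concat_cases {l p : List ℕ} {m : ℕ} (h : l <+: p ++ [m]) :
    l <+: p ∨ l = p ++ [m] := (List.prefix_concat_iff.mp h).symm

/-- Key uniqueness: the map `q ↦ nodeOf T q` reflects the prefix relation. -/
lemma nodeOf_reflect (T : Set (List ℕ)) :
    ∀ k q q', q.length + q'.length ≤ k → nodeOf T q <+: nodeOf T q' → q <+: q' := by
  intro k
  induction k with
  | zero =>
      intro q q' hlen _
      have : q = [] := by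
        cases q with
        | nil => rfl
        | cons a l => simp at hlen
      rw [this]; exact List.nil_prefix
  | succ k ih =>
      intro q q' hlen hpre
      rcases List.eq_nil_or_concat q' with rfl | ⟨p, m, rfl⟩
      · -- q' = [] : node q <+: rootW
        have h1 := nodeOf_len_ge T q
        have h2 := hpre.length_le
        simp only [nodeOf_nil] at h2
        have : q.length = 0 := by omega
        have : q = [] := List.length_eq_zero_iff.mp this
        rw [this]
      · rw [List.concat_eq_append] at *
        have hZ : nodeOf T (p ++ [m]) = nu T (nodeOf T p) m := nodeOf_snoc T p m
        have hpmZ : nodeOf T p ++ [m] <+: nodeOf T (p ++ [m]) := nodeOf_extend T p m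
        have hpZ : nodeOf T p <+: nodeOf T (p ++ [m]) :=
          (List.prefix_append _ _).trans hpmZ
        rcases le_or_gt (nodeOf T q).length (nodeOf T p).length with hle | hgt
        · -- node q <+: node p, use IH
          have : nodeOf T q <+: nodeOf T p :=
            List.prefix_of_prefix_length_le hpre hpZ hle
          have hq : q <+: p := by
            apply ih q p ?_ this
            simp at hlen; omega
          exact hq.trans (List.prefix_append _ _)
        · -- |node q| > |node p|
          rcases List.eq_nil_or_concat q with rfl | ⟨p₂, a, rfl⟩
          · exact List.nil_prefix
          rw [List.concat_eq_append] at *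
          have hq : nodeOf T (p₂ ++ [a]) = nu T (nodeOf T p₂) a := nodeOf_snoc T p₂ a
          have hp₂q : nodeOf T p₂ ++ [a] <+: nodeOf T (p₂ ++ [a]) := nodeOf_extend T p₂ a
          have hp₂Z : nodeOf T p₂ <+: nodeOf T (p ++ [m]) :=
            ((List.prefix_append _ _).trans hp₂q).trans hpre
          have haZ : nodeOf T p₂ ++ [a] <+: nodeOf T (p ++ [m]) := hp₂q.trans hpre
          -- `node p ++ [m] <+: node q`
          have hpmq : nodeOf T p ++ [m] <+: nodeOf T (p₂ ++ [a]) := by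
            apply List.prefix_of_prefix_length_le hpmZ hpre
            simp only [List.length_append, List.length_singleton]
            omega
          rcases lt_trichotomy (nodeOf T p₂).length (nodeOf T p).length with hc | hc | hc
          · -- impossible subcase
            exfalso
            have h1 : nodeOf T p₂ <+: nodeOf T p :=
              List.prefix_of_prefix_length_le hp₂Z hpZ (by omega)
            have hp₂p : p₂ <+: p := by
              apply ih p₂ p ?_ h1
              simp at hlen; omega
            have hne : p₂ ≠ p := by
              intro he; rw [he] at hc; exact lt_irrefl _ hc
            -- p₂ is a strict prefix of p; get the next entry a'
            obtain ⟨tl, htl⟩ := hp₂p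
            have htlne : tl ≠ [] := by
              intro he; rw [he, List.append_nil] at htl; exact hne htl
            obtain ⟨a', tl', rfl⟩ := List.exists_cons_of_ne_nil htlne
            have hpa' : p₂ ++ [a'] <+: p := by
              rw [← htl]
              refine ⟨tl', by simp⟩
            have ha'Z : nodeOf T p₂ ++ [a'] <+: nodeOf T (p ++ [m]) := by
              have h2 : nodeOf T (p₂ ++ [a']) <+: nodeOf T p := nodeOf_mono T hpa'
              exact ((nodeOf_extend T p₂ a').trans h2).trans hpZ
            -- both a and a' are the entry of Z at position |node p₂|
            have hlen2 : (nodeOf T p₂).length < (nodeOf T p₂ ++ [a]).length := by simp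
            have e1 : a = (nodeOf T (p ++ [m]))[(nodeOf T p₂).length]'
                (lt_of_lt_of_le (by simp) haZ.length_le) := by
              rw [← haZ.getElem (by simp)]
              exact (List.getElem_concat_length rfl _).symm
            have e2 : a' = (nodeOf T (p ++ [m]))[(nodeOf T p₂).length]'
                (lt_of_lt_of_le (by simp) ha'Z.length_le) := by
              rw [← ha'Z.getElem (by simp)]
              exact (List.getElem_concat_length rfl _).symm
            have haa : a = a' := by rw [e1, e2]
            -- then node q <+: node p : contradiction with hgt
            have : nodeOf T (p₂ ++ [a]) <+: nodeOf T p := by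
              rw [haa]
              exact nodeOf_mono T hpa'
            have := this.length_le
            omega
          · -- |node p₂| = |node p| : conclude q = q'
            have hnn : nodeOf T p₂ = nodeOf T p :=
              (List.prefix_of_prefix_length_le hp₂Z hpZ (by omega)).eq_of_length hc
            have hamq : a = m := by
              have h1 : nodeOf T p ++ [a] <+: nodeOf T (p ++ [m]) := by
                rw [← hnn]; exact haZ
              have h2 : nodeOf T p ++ [a] = nodeOf T p ++ [m] := by
                apply List.IsPrefix.eq_of_length
                · exact List.prefix_of_prefix_length_le h1 hpmZ (by simp)
                · simp
              have := List.append_cancel_left h2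
              simpa using this
            have hp₂p : p₂ = p := by
              have h1 : p₂ <+: p := by
                apply ih p₂ p ?_ (hnn ▸ List.prefix_refl _)
                simp at hlen; omega
              have h2 : p <+: p₂ := by
                apply ih p p₂ ?_ (hnn ▸ List.prefix_refl _)
                simp at hlen; omega
              exact h1.eq_of_length (le_antisymm h1.length_le h2.length_le)
            rw [hp₂p, hamq]
          · -- |node p₂| > |node p| : impossible
            exfalso
            have hp₂q' : p₂ <+: p ++ [m] := by
              apply ih p₂ (p ++ [m]) ?_ hp₂Z
              simp at hlen ⊢; omega
            rcases prefix_concat_cases hp₂q' with h1 | h1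
            · have := (nodeOf_mono T h1).length_le
              omega
            · -- p₂ = p ++ [m], so node p₂ = Z, but node q strictly extends node p₂ and <+: Z
              have h4 : (nodeOf T p₂).length = (nodeOf T (p ++ [m])).length := by rw [h1]
              have h2 := hp₂q.length_le
              have h3 := hpre.length_le
              simp only [List.length_append, List.length_singleton] at h2
              omega

lemma nodeOf_prefix_reflect {T : Set (List ℕ)} {q q' : List ℕ}
    (h : nodeOf T q <+: nodeOf T q') : q <+: q' :=
  nodeOf_reflect T (q.length + q'.length) q q' le_rfl h

/-! ### The thinned subtree -/

def validSeq (T : Set (List ℕ)) (g : ℕ → ℕ) (q : List ℕ) : Prop :=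
  ∀ i (h : i < q.length), q[i] ∈ Asucc T (nodeOf T (q.take i)) ∧ g i ≤ q[i]

def fbdd (T : Set (List ℕ)) (f : ℕ → ℕ) (q : List ℕ) : Prop :=
  ∀ i (h : i < q.length), q[i] ≤ f (nodeOf T (q.take i)).length

lemma take_prefix_eq {q q' : List ℕ} (h : q <+: q') {i : ℕ} (hi : i ≤ q.length) :
    q'.take i = q.take i := by
  obtain ⟨t, rfl⟩ := h
  exact List.take_append_of_le_length hi

lemma validSeq_prefix {T : Set (List ℕ)} {g : ℕ → ℕ} {q q' : List ℕ}
    (h : validSeq T g q') (hp : q <+: q') : validSeq T g q := by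
  intro i hi
  rw [hp.getElem hi]
  have := h i (lt_of_lt_of_le hi hp.length_le)
  rwa [take_prefix_eq hp (le_of_lt hi)] at this

lemma validSeq_snoc {T : Set (List ℕ)} {g : ℕ → ℕ} {q : List ℕ} {n : ℕ}
    (h : validSeq T g q) (hn : n ∈ Asucc T (nodeOf T q)) (hg : g q.length ≤ n) :
    validSeq T g (q ++ [n]) := by
  intro i hi
  simp only [List.length_append, List.length_singleton] at hi
  rcases lt_or_ge i q.length with hlt | hge
  · rw [List.getElem_append_left hlt, take_prefix_eq (List.prefix_append q [n]) (le_of_lt hlt)]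
    exact h i hlt
  · have hieq : i = q.length := by omega
    subst hieq
    rw [List.getElem_concat_length rfl, take_prefix_eq (List.prefix_append q [n]) le_rfl,
      List.take_length]
    exact ⟨hn, hg⟩

lemma fbdd_prefix {T : Set (List ℕ)} {f : ℕ → ℕ} {q q' : List ℕ}
    (h : fbdd T f q') (hp : q <+: q') : fbdd T f q := by
  intro i hi
  rw [hp.getElem hi]
  have := h i (lt_of_lt_of_le hi hp.length_le)
  rwa [take_prefix_eq hp (le_of_lt hi)] at this

lemma fbdd_snoc {T : Set (List ℕ)} {f : ℕ → ℕ} {q : List ℕ} {n : ℕ}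
    (h : fbdd T f q) (hn : n ≤ f (nodeOf T q).length) : fbdd T f (q ++ [n]) := by
  intro i hi
  simp only [List.length_append, List.length_singleton] at hi
  rcases lt_or_ge i q.length with hlt | hge
  · rw [List.getElem_append_left hlt, take_prefix_eq (List.prefix_append q [n]) (le_of_lt hlt)]
    exact h i hlt
  · have hieq : i = q.length := by omega
    subst hieq
    rw [List.getElem_concat_length rfl, take_prefix_eq (List.prefix_append q [n]) le_rfl,
      List.take_length]
    exact hn

lemma validSeq_nodeOf_memW {T : Set (List ℕ)} (hT : IsMiller T) {g : ℕ → ℕ} :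
    ∀ {q : List ℕ}, validSeq T g q → nodeOf T q ∈ Wsplit T := by
  intro q
  induction q using List.reverseRecOn with
  | nil => intro _; exact rootW_memW hT
  | append_singleton p m ih =>
      intro hv
      have hvp : validSeq T g p := validSeq_prefix hv (List.prefix_append p [m])
      have hm := (hv p.length (by simp)).1
      rw [List.getElem_concat_length rfl, take_prefix_eq (List.prefix_append p [m]) le_rfl,
        List.take_length] at hm
      rw [nodeOf_snoc]
      exact nu_memW hT (ih hvp) hm

def Tprime (T : Set (List ℕ)) (g : ℕ → ℕ) : Set (List ℕ) :=
  {s | ∃ q, validSeq T g q ∧ s <+: nodeOf T q}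

lemma Tprime_subset {T : Set (List ℕ)} (hT : IsMiller T) (g : ℕ → ℕ) : Tprime T g ⊆ T := by
  rintro s ⟨q, hv, hs⟩
  exact hT.1.2 _ (validSeq_nodeOf_memW hT hv).1 s hs

lemma Tprime_isMiller {T : Set (List ℕ)} (hT : IsMiller T) (g : ℕ → ℕ) :
    IsMiller (Tprime T g) := by
  constructor
  · constructor
    · exact ⟨[], [], fun i hi => by simp at hi, List.nil_prefix⟩
    · rintro s ⟨q, hv, hs⟩ t hts
      exact ⟨q, hv, hts.trans hs⟩
  · rintro t ⟨q, hv, hts⟩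
    refine ⟨nodeOf T q, ⟨q, hv, List.prefix_refl _⟩, hts, ?_⟩
    have hW := validSeq_nodeOf_memW hT hv
    apply Set.Infinite.mono (s := Asucc T (nodeOf T q) \ {n | n < g q.length})
    · intro n hn
      refine ⟨q ++ [n], validSeq_snoc hv hn.1 (by simpa using hn.2), nodeOf_extend T q n⟩
    · exact hW.2.diff (Set.finite_lt_nat _)

/-! ### Finiteness of bounded positions -/

def PosSet (T : Set (List ℕ)) (f : ℕ → ℕ) (k : ℕ) : Set (List ℕ) :=
  {q | q.length = k ∧ fbdd T f q}

lemma PosSet_finite (T : Set (List ℕ)) (f : ℕ → ℕ) : ∀ k, (PosSet T f k).Finite := by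
  intro k
  induction k with
  | zero =>
      apply Set.Finite.subset (Set.finite_singleton [])
      rintro q ⟨hlen, _⟩
      exact List.length_eq_zero_iff.mp hlen
  | succ k ih =>
      have hbi : (⋃ p ∈ PosSet T f k,
          (fun n => p ++ [n]) '' Set.Iic (f (nodeOf T p).length)).Finite :=
        Set.Finite.biUnion ih (fun p _ => (Set.finite_Iic _).image _)
      apply Set.Finite.subset hbi
      rintro q ⟨hlen, hb⟩
      rcases List.eq_nil_or_concat q with rfl | ⟨p, a, rfl⟩
      · simp at hlen
      · rw [List.concat_eq_append] at *
        have hplen : p.length = k := by simp at hlen; omega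
        have hp : p ∈ PosSet T f k := ⟨hplen, fbdd_prefix hb (List.prefix_append p [a])⟩
        have ha : a ≤ f (nodeOf T p).length := by
          have := hb p.length (by simp)
          rwa [List.getElem_concat_length rfl,
            take_prefix_eq (List.prefix_append p [a]) le_rfl, List.take_length] at this
        exact Set.mem_biUnion hp ⟨a, ha, rfl⟩

noncomputable def Vbd (T : Set (List ℕ)) (f : ℕ → ℕ) (k : ℕ) : ℕ :=
  sSup ((fun q => f (nodeOf T q).length) '' PosSet T f k)

lemma Vbd_ge {T : Set (List ℕ)} {f : ℕ → ℕ} {k : ℕ} {q : List ℕ} (hq : q ∈ PosSet T f k) :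
    f (nodeOf T q).length ≤ Vbd T f k :=
  le_csSup (((PosSet_finite T f k).image _).bddAbove) ⟨q, hq, rfl⟩

/-! ### Branches of the thinned tree follow the canonical skeleton -/

lemma base_step {T : Set (List ℕ)} {g : ℕ → ℕ} {x : ℕ → ℕ}
    (hx : ∀ M, seqRestrict x M ∈ Tprime T g) :
    nodeOf T [] = seqRestrict x (nodeOf T ([] : List ℕ)).length := by
  obtain ⟨q, hv, hpre⟩ := hx ((rootW T).length + 1)
  have h1 : nodeOf T ([] : List ℕ) <+: nodeOf T q := nodeOf_mono T List.nil_prefix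
  have h2 : nodeOf T ([] : List ℕ) <+: seqRestrict x ((rootW T).length + 1) := by
    apply List.prefix_of_prefix_length_le h1 hpre
    simp
  have := prefix_seqRestrict h2
  simpa using this

lemma succ_step {T : Set (List ℕ)} {g : ℕ → ℕ} {x : ℕ → ℕ}
    (hx : ∀ M, seqRestrict x M ∈ Tprime T g) {q : List ℕ} (hv : validSeq T g q)
    (hnode : nodeOf T q = seqRestrict x (nodeOf T q).length) :
    validSeq T g (q ++ [x (nodeOf T q).length]) ∧
      nodeOf T (q ++ [x (nodeOf T q).length]) =
        seqRestrict x (nodeOf T (q ++ [x (nodeOf T q).length])).length := by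
  set l := (nodeOf T q).length with hl
  set n := x l with hn
  set M := (nodeOf T (q ++ [n])).length + 1 with hM
  have hlM : l + 1 < M := by
    have := (nodeOf_extend T q n).length_le
    simp only [List.length_append, List.length_singleton] at this
    omega
  obtain ⟨q', hv', hpre⟩ := hx M
  -- node q <+: node q'
  have hq_x : nodeOf T q <+: seqRestrict x M := by
    rw [hnode]
    exact seqRestrict_prefix x (by omega)
  have hqq' : nodeOf T q <+: nodeOf T q' := hq_x.trans hpre
  have hq_pref : q <+: q' := nodeOf_prefix_reflect hqq'
  have hlt : q.length < q'.length := by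
    rcases lt_or_eq_of_le hq_pref.length_le with h | h
    · exact h
    · exfalso
      have : q = q' := hq_pref.eq_of_length h
      subst this
      have h2 := hpre.length_le
      simp only [seqRestrict_length] at h2
      omega
  -- extract the next choice
  obtain ⟨tl, htl⟩ := hq_pref
  have htlne : tl ≠ [] := by
    intro he; rw [he, List.append_nil] at htl
    rw [htl] at hlt; exact lt_irrefl _ hlt
  obtain ⟨n', tl', rfl⟩ := List.exists_cons_of_ne_nil htlne
  have hqn' : q ++ [n'] <+: q' := by
    rw [← htl]; exact ⟨tl', by simp⟩
  have hnodeq : nodeOf T (q ++ [n']) <+: nodeOf T q' := nodeOf_mono T hqn'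
  have hcat : nodeOf T q ++ [n'] <+: nodeOf T q' := (nodeOf_extend T q n').trans hnodeq
  -- n' = x l
  have hn'eq : n' = n := by
    have e1 : n' = (nodeOf T q')[l]'(lt_of_lt_of_le (by simp [hl]) hcat.length_le) := by
      rw [← hcat.getElem (by simp [hl])]
      exact (List.getElem_concat_length (by rw [hl]) _).symm
    have e2 : (nodeOf T q')[l]'(lt_of_lt_of_le (by simp [hl]) hcat.length_le) = x l := by
      rw [← hpre.getElem (by simp; omega)]
      exact seqRestrict_getElem x (by omega)
    rw [e1, e2, hn]
  rw [hn'eq] at hqn' hnodeq hcat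
  constructor
  · exact validSeq_prefix hv' hqn'
  · have h1 : nodeOf T (q ++ [n]) <+: seqRestrict x M := by
      apply List.prefix_of_prefix_length_le hnodeq hpre
      simp [hM]
    have := prefix_seqRestrict h1
    exact this


/-- Assuming `𝔡 = 𝔠`, Miller forcing has the incompatibility shrinking property: for every
Miller tree `T` and every family of fewer than continuum many Miller trees each incompatible
with `T`, there is a Miller tree `T' ⊆ T` whose branch set avoids all their branch sets. -/
theorem miller_incompatShrinking_of_d_eq_c (hd : dominatingNumber = Cardinal.continuum)
    (T : Set (List ℕ)) (hT : IsMiller T)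
    (ι : Type) (hcard : Cardinal.mk ι < Cardinal.continuum)
    (S : ι → Set (List ℕ)) (hS : ∀ a : ι, IsMiller (S a))
    (hincompat : ∀ a : ι, ¬ ∃ R : Set (List ℕ), IsMiller R ∧ R ⊆ T ∧ R ⊆ S a) :
    ∃ T' : Set (List ℕ), IsMiller T' ∧ T' ⊆ T ∧
      ∀ a : ι, branches T' ∩ branches (S a) = ∅ := by
  classical
  have hQtree : ∀ a : ι, IsSeqTree (T ∩ S a) := by
    intro a
    constructor
    · exact ⟨[], nil_mem_tree hT.1, nil_mem_tree (hS a).1⟩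
    · rintro s ⟨hsT, hsS⟩ t hts
      exact ⟨hT.1.2 s hsT t hts, (hS a).1.2 s hsS t hts⟩
  have hbd : ∀ a : ι, ∃ F : ℕ → ℕ → ℕ,
      ∀ x ∈ branches (T ∩ S a), ∃ n, ∀ m, x m ≤ F n m := by
    intro a
    apply exists_bound (hQtree a)
    intro R hR hsub
    exact hincompat a ⟨R, hR, fun u hu => (hsub hu).1, fun u hu => (hsub hu).2⟩
  choose Ffam hFfam using hbd
  set H : ι × ℕ → (ℕ → ℕ) := fun p => Vbd T (Ffam p.1 p.2) with hH
  have hHlt : Cardinal.mk (Set.range H) < dominatingNumber := by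
    rw [hd]
    calc Cardinal.mk (Set.range H) ≤ Cardinal.mk (ι × ℕ) := Cardinal.mk_range_le
      _ < Cardinal.continuum := by
          rw [Cardinal.mk_prod, Cardinal.lift_id, Cardinal.lift_id, Cardinal.mk_nat]
          exact Cardinal.mul_lt_of_lt Cardinal.aleph0_lt_continuum.le hcard
            Cardinal.aleph0_lt_continuum
  have hescape : ∃ g : ℕ → ℕ, ∀ p : ι × ℕ, ∃ k, H p k < g k := by
    by_contra hcon
    push_neg at hcon
    have hdom : ∀ g : ℕ → ℕ, ∃ f ∈ Set.range H, ∀ᶠ n in Filter.atTop, g n ≤ f n := by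
      intro g
      obtain ⟨p, hp⟩ := hcon g
      exact ⟨H p, Set.mem_range_self p,
        Filter.Eventually.of_forall (fun n => hp n)⟩
    have hle : dominatingNumber ≤ Cardinal.mk (Set.range H) :=
      csInf_le' ⟨Set.range H, rfl, hdom⟩
    exact absurd (lt_of_le_of_lt hle hHlt) (lt_irrefl _)
  obtain ⟨g, hg⟩ := hescape
  refine ⟨Tprime T g, Tprime_isMiller hT g, Tprime_subset hT g, ?_⟩
  intro a
  rw [Set.eq_empty_iff_forall_notMem]
  rintro x ⟨hx1, hx2⟩
  have hx1' : ∀ M, seqRestrict x M ∈ Tprime T g := hx1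
  have hxT : x ∈ branches T := fun M => Tprime_subset hT g (hx1' M)
  have hxQ : x ∈ branches (T ∩ S a) := fun M => ⟨hxT M, hx2 M⟩
  obtain ⟨n₀, hb⟩ := hFfam a x hxQ
  set f := Ffam a n₀ with hf
  obtain ⟨k, hk⟩ := hg (a, n₀)
  have hinv : ∀ j, ∃ q : List ℕ, q.length = j ∧ validSeq T g q ∧
      nodeOf T q = seqRestrict x (nodeOf T q).length ∧ fbdd T f q := by
    intro j
    induction j with
    | zero =>
        exact ⟨[], rfl, fun i hi => by simp at hi, base_step hx1',
          fun i hi => by simp at hi⟩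
    | succ j ih =>
        obtain ⟨q, hlen, hv, hnode, hfb⟩ := ih
        obtain ⟨hv', hnode'⟩ := succ_step hx1' hv hnode
        exact ⟨q ++ [x (nodeOf T q).length], by simp [hlen], hv', hnode',
          fbdd_snoc hfb (hb _)⟩
  obtain ⟨q, hlen, hv, hnode, hfb⟩ := hinv k
  have hq' := succ_step hx1' hv hnode
  have hval := hq'.1 q.length (by simp)
  rw [List.getElem_concat_length rfl] at hval
  have hgn : g q.length ≤ x (nodeOf T q).length := hval.2
  have hPos : q ∈ PosSet T f k := ⟨hlen, hfb⟩
  have h1 : f (nodeOf T q).length ≤ Vbd T f k := Vbd_ge hPos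
  have h2 : x (nodeOf T q).length ≤ f (nodeOf T q).length := hb _
  rw [hlen] at hgn
  have : H (a, n₀) k = Vbd T f k := by rw [hH, hf]
  omega
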